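/- Let x, y ∈ [0,1] and z ∈ ℝ. The point (x, y, z) belongs to the convex hull in ℝ³ of the six points Q₁=(1,1,1), Q₂=(0,0,0), Q₃=(x,0,0), Q₄=(0,y,0), Q₅=(x,1,x), Q₆=(1,y,y) if and only if x·y ≤ z ≤ min(x, y). -/

import Mathlib

theorem conjunction_same_consequent_hull (x y z : ℝ)
    (hx : x ∈ Set.Icc (0 : ℝ) 1) (hy : y ∈ Set.Icc (0 : ℝ) 1) :
    (![x, y, z] ∈ convexHull ℝ
      ({![1, 1, 1], ![0, 0, 0], ![x, 0, 0], ![0, y, 0], ![x, 1, x], ![1, y, y]} :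
        Set (Fin 3 → ℝ))) ↔ (x * y ≤ z ∧ z ≤ min x y) := by
  obtain ⟨hx0, hx1⟩ := hx
  obtain ⟨hy0, hy1⟩ := hy
  set S : Set (Fin 3 → ℝ) :=
    {![1, 1, 1], ![0, 0, 0], ![x, 0, 0], ![0, y, 0], ![x, 1, x], ![1, y, y]} with hS
  constructor
  · intro hmem
    -- use three supporting halfspaces
    have hsub : convexHull ℝ S ⊆
        {p : Fin 3 → ℝ | p 2 ≤ p 0 ∧ p 2 ≤ p 1 ∧ x * p 1 + y * p 0 - p 2 ≤ x * y} := by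
      apply convexHull_min
      · intro p hp
        simp only [hS, Set.mem_insert_iff, Set.mem_singleton_iff] at hp
        rcases hp with rfl | rfl | rfl | rfl | rfl | rfl <;>
          simp only [Set.mem_setOf_eq, Matrix.cons_val_zero, Matrix.cons_val_one,
            Matrix.head_cons, Matrix.cons_val_two, Matrix.tail_cons] <;>
          constructor <;> try constructor
        all_goals nlinarith [mul_nonneg hx0 hy0, mul_nonneg (sub_nonneg.2 hx1) (sub_nonneg.2 hy1)]
      · intro p hp q hq a b ha hb hab
        simp only [Set.mem_setOf_eq, Pi.add_apply, Pi.smul_apply, smul_eq_mul] at *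
        obtain ⟨h1, h2, h3⟩ := hp
        obtain ⟨h4, h5, h6⟩ := hq
        have hb' : b = 1 - a := by linarith
        subst hb'
        refine ⟨by nlinarith, by nlinarith, ?_⟩
        nlinarith [mul_le_mul_of_nonneg_left h3 ha, mul_le_mul_of_nonneg_left h6 hb]
    have := hsub hmem
    simp only [Set.mem_setOf_eq, Matrix.cons_val_zero, Matrix.cons_val_one,
      Matrix.head_cons, Matrix.cons_val_two, Matrix.tail_cons] at this
    obtain ⟨h1, h2, h3⟩ := this
    exact ⟨by nlinarith, le_min h1 h2⟩
  · rintro ⟨hz1, hz2⟩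
    have hC : Convex ℝ (convexHull ℝ S) := convex_convexHull ℝ S
    have hQ1 : ![(1:ℝ), 1, 1] ∈ convexHull ℝ S := subset_convexHull ℝ S (by simp [hS])
    have hQ2 : ![(0:ℝ), 0, 0] ∈ convexHull ℝ S := subset_convexHull ℝ S (by simp [hS])
    have hQ3 : ![x, 0, 0] ∈ convexHull ℝ S := subset_convexHull ℝ S (by simp [hS])
    have hQ4 : ![0, y, 0] ∈ convexHull ℝ S := subset_convexHull ℝ S (by simp [hS])
    have hQ5 : ![x, 1, x] ∈ convexHull ℝ S := subset_convexHull ℝ S (by simp [hS])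
    -- lower point (x, y, x*y)
    have hlow : ![x, y, x * y] ∈ convexHull ℝ S := by
      have := hC hQ5 hQ3 hy0 (by linarith : (0:ℝ) ≤ 1 - y) (by ring)
      convert this using 1
      funext i
      fin_cases i <;> simp <;> ring
    -- upper point (x, y, min x y)
    have hhigh : ![x, y, min x y] ∈ convexHull ℝ S := by
      rcases le_total x y with hxy | hxy
      · rw [min_eq_left hxy]
        rcases eq_or_lt_of_le hy0 with hy0' | hy0'
        · have hx0' : x = 0 := le_antisymm (hxy.trans hy0'.symm.le) hx0
          have hy0'' : y = 0 := hy0'.symm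
          rw [hx0', hy0'']
          exact hQ2
        · have hm : ![y, y, y] ∈ convexHull ℝ S := by
            have := hC hQ1 hQ2 hy0 (by linarith : (0:ℝ) ≤ 1 - y) (by ring)
            convert this using 1
            funext i
            fin_cases i <;> simp
          have h1 : (0:ℝ) ≤ x / y := div_nonneg hx0 hy0'.le
          have h2 : (0:ℝ) ≤ 1 - x / y := by
            have : x / y ≤ 1 := (div_le_one hy0').2 hxy
            linarith
          have := hC hm hQ4 h1 h2 (by ring)
          convert this using 1
          funext i
          fin_cases i <;> simp <;> field_simp <;> ring
      · rw [min_eq_right hxy]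
        rcases eq_or_lt_of_le hx0 with hx0' | hx0'
        · have hy0' : y = 0 := le_antisymm (hxy.trans hx0'.symm.le) hy0
          have hx0'' : x = 0 := hx0'.symm
          rw [hx0'', hy0']
          exact hQ2
        · have hm : ![x, x, x] ∈ convexHull ℝ S := by
            have := hC hQ1 hQ2 hx0 (by linarith : (0:ℝ) ≤ 1 - x) (by ring)
            convert this using 1
            funext i
            fin_cases i <;> simp
          have h1 : (0:ℝ) ≤ y / x := div_nonneg hy0 hx0'.le
          have h2 : (0:ℝ) ≤ 1 - y / x := by
            have : y / x ≤ 1 := (div_le_one hx0').2 hxy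
            linarith
          have := hC hm hQ3 h1 h2 (by ring)
          convert this using 1
          funext i
          fin_cases i <;> simp <;> field_simp <;> ring
    -- interpolate
    have hle : x * y ≤ min x y := hz1.trans hz2
    rcases eq_or_lt_of_le hle with hD | hD
    · have hz : z = x * y := le_antisymm (hz2.trans hD.symm.le) hz1
      rw [hz]; exact hlow
    · have hDpos : 0 < min x y - x * y := sub_pos.mpr hD
      set t := (min x y - z) / (min x y - x * y) with htdef
      clear_value t
      have ht0 : 0 ≤ t := by rw [htdef]; exact div_nonneg (by linarith) hDpos.le
      have ht1 : t ≤ 1 := by rw [htdef, div_le_one hDpos]; linarith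
      have htD : t * (min x y - x * y) = min x y - z := by
        rw [htdef]; exact div_mul_cancel₀ _ (ne_of_gt hDpos)
      have := hC hlow hhigh ht0 (by linarith : (0:ℝ) ≤ 1 - t) (by ring)
      convert this using 1
      funext i
      fin_cases i
      · simp; ring
      · simp; ring
      · show z = _
        simp
        linear_combination htD
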